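/- Let Q be a unital quantale with unit e. Assume Q possesses a dualizing element δ and that the multiplication distributes over nonempty infima in each variable, i.e. for every nonempty A ⊆ Q and every b ∈ Q one has b * sInf A = ⨅ a ∈ A, b * a and (sInf A) * b = ⨅ a ∈ A, a * b. If the unit e is ◁-approximable, then every element α ∈ Q is ◁-approximable, i.e. α ≤ sSup {β | β ◁ α} for all α ∈ Q (so the underlying complete lattice of Q is completely distributive). -/
import Mathlib


/-- In a unital quantale with a dualizing element whose multiplication
distributes over nonempty infima, ◁-approximability of the unit implies every element
is ◁-approximable (complete distributivity of the underlying lattice). -/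
theorem stmt_0 {Q : Type*} [CompleteLattice Q] (mul : Q → Q → Q)
    (hassoc : ∀ a b c : Q, mul (mul a b) c = mul a (mul b c))
    (hsSup_left : ∀ (A : Set Q) (b : Q), mul (sSup A) b = ⨆ a ∈ A, mul a b)
    (hsSup_right : ∀ (A : Set Q) (b : Q), mul b (sSup A) = ⨆ a ∈ A, mul b a)
    (e : Q) (he_left : ∀ a : Q, mul e a = a) (he_right : ∀ a : Q, mul a e = a)
    (δ : Q)
    (hdualizing : ∀ α : Q,
      sSup {c : Q | mul c (sSup {d : Q | mul α d ≤ δ}) ≤ δ} = α ∧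
      sSup {d : Q | mul (sSup {c : Q | mul c α ≤ δ}) d ≤ δ} = α)
    (hsInf_right : ∀ (A : Set Q), A.Nonempty → ∀ b : Q,
      mul b (sInf A) = ⨅ a ∈ A, mul b a)
    (hsInf_left : ∀ (A : Set Q), A.Nonempty → ∀ b : Q,
      mul (sInf A) b = ⨅ a ∈ A, mul a b)
    (he_approx : e ≤ sSup {β : Q | ∀ A : Set Q, e ≤ sSup A → ∃ c ∈ A, β ≤ c}) :
    ∀ α : Q, α ≤ sSup {β : Q | ∀ A : Set Q, α ≤ sSup A → ∃ c ∈ A, β ≤ c} := by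
  classical
  -- monotonicity of mul in each variable
  have monoL : ∀ {x y : Q} (b : Q), x ≤ y → mul x b ≤ mul y b := by
    intro x y b h
    have h1 := hsSup_left {x, y} b
    have hxy : sSup ({x, y} : Set Q) = y := by
      rw [sSup_pair, sup_eq_right.mpr h]
    rw [hxy] at h1
    calc mul x b ≤ ⨆ a ∈ ({x, y} : Set Q), mul a b := by
          refine le_iSup_of_le x ?_
          simp
      _ = mul y b := h1.symm
  have monoR : ∀ {x y : Q} (b : Q), x ≤ y → mul b x ≤ mul b y := by
    intro x y b h
    have h1 := hsSup_right {x, y} b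
    have hxy : sSup ({x, y} : Set Q) = y := by
      rw [sSup_pair, sup_eq_right.mpr h]
    rw [hxy] at h1
    calc mul b x ≤ ⨆ a ∈ ({x, y} : Set Q), mul b a := by
          refine le_iSup_of_le x ?_
          simp
      _ = mul b y := h1.symm
  set ρ : Q → Q := fun x => sSup {d : Q | mul x d ≤ δ} with hρ
  set lam : Q → Q := fun x => sSup {c : Q | mul c x ≤ δ} with hlam
  have hρδ : ∀ x, mul x (ρ x) ≤ δ := by
    intro x
    rw [hρ]
    simp only
    rw [hsSup_right]
    exact iSup₂_le fun d hd => hd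
  have hlamδ : ∀ x, mul (lam x) x ≤ δ := by
    intro x
    rw [hlam]
    simp only
    rw [hsSup_left]
    exact iSup₂_le fun c hc => hc
  have hlamρ : ∀ x, lam (ρ x) = x := fun x => (hdualizing x).1
  have hρlam : ∀ x, ρ (lam x) = x := fun x => (hdualizing x).2
  have hGal : ∀ {x y : Q}, mul x y ≤ δ → x ≤ lam y := fun h => le_sSup h
  have hGal' : ∀ {x y : Q}, mul x y ≤ δ → y ≤ ρ x := fun h => le_sSup h
  have hρanti : ∀ {x y : Q}, x ≤ y → ρ y ≤ ρ x := by
    intro x y h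
    exact hGal' (le_trans (monoL _ h) (hρδ y))
  have hlamanti : ∀ {x y : Q}, x ≤ y → lam y ≤ lam x := by
    intro x y h
    exact hGal (le_trans (monoR _ h) (hlamδ y))
  -- ρ turns sups into infs
  have hρsSup : ∀ A : Set Q, ρ (sSup A) = sInf (ρ '' A) := by
    intro A
    apply le_antisymm
    · exact le_sInf (by rintro _ ⟨a, ha, rfl⟩; exact hρanti (le_sSup ha))
    · apply hGal'
      rw [hsSup_left]
      refine iSup₂_le fun a ha => ?_
      refine le_trans (monoR a (sInf_le ⟨a, ha, rfl⟩)) (hρδ a)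
  -- lam turns infs into sups
  have hlamsInf : ∀ C : Set Q, lam (sInf C) = sSup (lam '' C) := by
    intro C
    apply le_antisymm
    · have h1 : ρ (sSup (lam '' C)) ≤ sInf C := by
        refine le_sInf fun c hc => ?_
        have := hρanti (le_sSup (Set.mem_image_of_mem lam hc))
        rwa [hρlam] at this
      have := hlamanti h1
      rwa [hlamρ] at this
    · exact sSup_le (by rintro _ ⟨c, hc, rfl⟩; exact hlamanti (sInf_le hc))
  intro α
  by_cases hα : α = ⊥
  · subst hα; exact bot_le
  -- key lemma: γ ◁ e implies mul γ α ◁ α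
  have key : ∀ γ ∈ {β : Q | ∀ A : Set Q, e ≤ sSup A → ∃ c ∈ A, β ≤ c},
      mul γ α ∈ {β : Q | ∀ A : Set Q, α ≤ sSup A → ∃ c ∈ A, β ≤ c} := by
    intro γ hγ A hA
    have hAne : A.Nonempty := by
      rcases Set.eq_empty_or_nonempty A with h | h
      · exfalso
        apply hα
        rw [h, sSup_empty] at hA
        exact le_bot_iff.mp hA
      · exact h
    set B : Set Q := (fun a => lam (mul α (ρ a))) '' A with hB
    have heB : e ≤ sSup B := by
      have hBeq : sSup B = lam (mul α (ρ (sSup A))) := by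
        have h1 : B = lam '' ((fun a => mul α (ρ a)) '' A) := by
          rw [hB, Set.image_image]
        rw [h1, ← hlamsInf]
        congr 1
        rw [hρsSup, hsInf_right (ρ '' A) (hAne.image ρ) α, sInf_image, iInf_image]
      rw [hBeq]
      apply hGal
      rw [he_left]
      exact le_trans (monoL _ hA) (hρδ (sSup A))
    obtain ⟨b, hbB, hγb⟩ := hγ B heB
    obtain ⟨a, haA, rfl⟩ := hbB
    refine ⟨a, haA, ?_⟩
    have h2 : mul (lam (mul α (ρ a))) α ≤ a := by
      have h3 : mul (mul (lam (mul α (ρ a))) α) (ρ a) ≤ δ := by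
        rw [hassoc]
        exact hlamδ (mul α (ρ a))
      have := hGal h3
      rwa [hlamρ] at this
    exact le_trans (monoL α hγb) h2
  calc α = mul e α := (he_left α).symm
    _ ≤ mul (sSup {β : Q | ∀ A : Set Q, e ≤ sSup A → ∃ c ∈ A, β ≤ c}) α :=
        monoL α he_approx
    _ = ⨆ γ ∈ {β : Q | ∀ A : Set Q, e ≤ sSup A → ∃ c ∈ A, β ≤ c}, mul γ α :=
        hsSup_left _ α
    _ ≤ sSup {β : Q | ∀ A : Set Q, α ≤ sSup A → ∃ c ∈ A, β ≤ c} :=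
        iSup₂_le fun γ hγ => le_sSup (key γ hγ)
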